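/- Regular Bohr sets are ubiquitous: Let G be a finite additive (abelian) group, let S ⊆ Ĝ be a nonempty set of characters with |S| = d, and let 0 < ε < 1. Then there exists ρ ∈ [ε, 2ε] such that the Bohr set B(S,ρ) is regular. -/

import Mathlib

/-- The Bohr set `B(S,ρ) = {x ∈ G : ‖ξ·x‖_{ℝ/ℤ} < ρ for all ξ ∈ S}`, where `S` is a finite
set of characters (homomorphisms `G → ℝ/ℤ`) and the norm on `ℝ/ℤ` is the distance to the
nearest integer. -/
def bohr {G : Type*} [AddCommGroup G] (S : Finset (G →+ AddCircle (1 : ℝ))) (ρ : ℝ) : Set G :=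
  {x | ∀ ξ ∈ S, ‖ξ x‖ < ρ}

/-- A Bohr set `B(S,ρ)` with `|S| = d` is regular if
`(1 - 100d|κ|)|B(S,ρ)| ≤ |B(S,(1+κ)ρ)| ≤ (1 + 100d|κ|)|B(S,ρ)|` whenever `|κ| ≤ 1/(100d)`. -/
def IsRegularBohr {G : Type*} [AddCommGroup G] [Fintype G]
    (S : Finset (G →+ AddCircle (1 : ℝ))) (ρ : ℝ) : Prop :=
  ∀ κ : ℝ, |κ| ≤ 1 / (100 * S.card) →
    (1 - 100 * S.card * |κ|) * ((bohr S ρ).ncard : ℝ) ≤ ((bohr S ((1 + κ) * ρ)).ncard : ℝ) ∧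
    ((bohr S ((1 + κ) * ρ)).ncard : ℝ) ≤ (1 + 100 * S.card * |κ|) * ((bohr S ρ).ncard : ℝ)


section helpers

open Set



noncomputable def rep1 (z : AddCircle (1:ℝ)) : ℝ :=
  haveI : Fact ((0:ℝ) < 1) := ⟨zero_lt_one⟩
  ((AddCircle.equivIco 1 0 z : Set.Ico (0:ℝ) (0+1)) : ℝ)

lemma rep1_mem (z : AddCircle (1:ℝ)) : rep1 z ∈ Set.Ico (0:ℝ) 1 := by
  haveI : Fact ((0:ℝ) < 1) := ⟨zero_lt_one⟩
  have := (AddCircle.equivIco 1 0 z).2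
  simpa [rep1] using this

lemma coe_rep1 (z : AddCircle (1:ℝ)) : ((rep1 z : ℝ) : AddCircle (1:ℝ)) = z := by
  haveI : Fact ((0:ℝ) < 1) := ⟨zero_lt_one⟩
  induction z using QuotientAddGroup.induction_on with
  | H b =>
    show ((((QuotientAddGroup.equivIcoMod (zero_lt_one) 0) b : Set.Ico (0:ℝ) (0+1)) : ℝ) : AddCircle (1:ℝ)) = _
    rw [QuotientAddGroup.equivIcoMod_coe]
    have : toIcoMod (zero_lt_one) (0:ℝ) b - b ∈ AddSubgroup.zmultiples (1:ℝ) := by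
      rw [toIcoMod_sub_self]
      exact AddSubgroup.zsmul_mem _ (AddSubgroup.mem_zmultiples 1) _
    exact (QuotientAddGroup.eq_iff_sub_mem).2 this

lemma norm_coe_le1 (a : ℝ) : ‖((a : ℝ) : AddCircle (1:ℝ))‖ ≤ |a| := by
  rw [AddCircle.norm_eq]
  simpa using round_le a 0

lemma min_le_norm1 (z : AddCircle (1:ℝ)) : min (rep1 z) (1 - rep1 z) ≤ ‖z‖ := by
  conv_rhs => rw [← coe_rep1 z]
  rw [AddCircle.norm_eq]
  simp only [inv_one, one_mul, mul_one]
  rcases le_or_gt (round (rep1 z)) 0 with h | h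
  · refine le_trans (min_le_left _ _) ?_
    have h0 : (0:ℝ) ≤ rep1 z := (rep1_mem z).1
    have : (round (rep1 z) : ℝ) ≤ 0 := by exact_mod_cast h
    rw [abs_of_nonneg (by linarith)]; linarith
  · refine le_trans (min_le_right _ _) ?_
    have h1 : (1:ℝ) ≤ (round (rep1 z) : ℝ) := by exact_mod_cast h
    have h2 : rep1 z < 1 := (rep1_mem z).2
    rw [abs_of_nonpos (by linarith)]; linarith

variable {G : Type*} [AddCommGroup G] [Fintype G]

private lemma bohr_mono (S : Finset (G →+ AddCircle (1 : ℝ))) {r r' : ℝ} (h : r ≤ r') :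
    bohr S r ⊆ bohr S r' :=
  fun _ hx ξ hξ => lt_of_lt_of_le (hx ξ hξ) h

private lemma zero_mem_bohr (S : Finset (G →+ AddCircle (1 : ℝ))) {r : ℝ} (hr : 0 < r) :
    (0:G) ∈ bohr S r := by
  intro ξ hξ; simp [hr]

private lemma one_le_ncard_bohr (S : Finset (G →+ AddCircle (1 : ℝ))) {r : ℝ} (hr : 0 < r) :
    1 ≤ (bohr S r).ncard :=
  (Set.ncard_pos (Set.toFinite _)).2 ⟨0, zero_mem_bohr S hr⟩

private lemma ncard_bohr_mono (S : Finset (G →+ AddCircle (1 : ℝ))) {r r' : ℝ} (h : r ≤ r') :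
    (bohr S r).ncard ≤ (bohr S r').ncard :=
  Set.ncard_le_ncard (bohr_mono S h) (Set.toFinite _)


private lemma bohr_growth (S : Finset (G →+ AddCircle (1 : ℝ))) {ε : ℝ} (hε : 0 < ε) (hε1 : ε < 1) :
    (bohr S (4*ε)).ncard ≤ 26 ^ S.card * (bohr S (ε/2)).ncard := by
  classical
  set T : Finset G := (Set.toFinite (bohr S (4*ε))).toFinset with hT
  set B : Finset G := (Set.toFinite (bohr S (ε/2))).toFinset with hB
  have hTcard : (bohr S (4*ε)).ncard = T.card := Set.ncard_eq_toFinset_card _ _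
  have hBcard : (bohr S (ε/2)).ncard = B.card := Set.ncard_eq_toFinset_card _ _
  rw [hTcard, hBcard]
  -- the index map
  set Φ : G → (↥S → ℤ) := fun x ξ => ⌊rep1 (ξ.1 x) / (ε/2)⌋ with hΦ
  -- fibers are small
  have hfiber : ∀ a ∈ T.image Φ, (T.filter fun x => Φ x = a).card ≤ B.card := by
    intro a ha
    obtain ⟨y, hy, hya⟩ := Finset.mem_image.1 ha
    apply Finset.card_le_card_of_injOn (fun x => x - y)
    · intro x hx
      rw [Finset.mem_coe, Finset.mem_filter] at hx
      obtain ⟨hxT, hxa⟩ := hx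
      rw [hB, Set.Finite.coe_toFinset]
      intro ξ hξ
      have hfl : ⌊rep1 (ξ x) / (ε/2)⌋ = ⌊rep1 (ξ y) / (ε/2)⌋ := by
        have := congrFun (hxa.trans hya.symm) ⟨ξ, hξ⟩
        simpa [hΦ] using this
      have hd2 : |rep1 (ξ x) / (ε/2) - rep1 (ξ y) / (ε/2)| < 1 := Int.abs_sub_lt_one_of_floor_eq_floor hfl
      have hpos : (0:ℝ) < ε/2 := by linarith
      have hd : |rep1 (ξ x) - rep1 (ξ y)| < ε/2 := by
        rw [div_sub_div_same, abs_div, abs_of_pos hpos, div_lt_one hpos] at hd2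
        exact hd2
      have : ξ (x - y) = ((rep1 (ξ x) - rep1 (ξ y) : ℝ) : AddCircle (1:ℝ)) := by
        rw [map_sub]
        conv_lhs => rw [← coe_rep1 (ξ x), ← coe_rep1 (ξ y)]
        norm_cast
      rw [this]
      exact lt_of_le_of_lt (norm_coe_le1 _) hd
    · intro u _ v _ h
      simpa using h
  refine le_trans (Finset.card_le_mul_card_image (f := Φ) T B.card hfiber) ?_
  rw [mul_comm]
  apply Nat.mul_le_mul_right
  -- image is small
  set m : ℤ := ⌊2/ε⌋ with hm
  set J : Finset ℤ := Finset.Icc 0 16 ∪ Finset.Icc (m-8) m with hJ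
  have himg : T.image Φ ⊆ Fintype.piFinset (fun _ : ↥S => J) := by
    intro a ha
    obtain ⟨x, hx, rfl⟩ := Finset.mem_image.1 ha
    rw [hT, Set.Finite.mem_toFinset] at hx
    rw [Fintype.mem_piFinset]
    intro ξ
    have hrm := rep1_mem (ξ.1 x)
    have hpos : (0:ℝ) < ε/2 := by linarith
    set w : ℝ := rep1 (ξ.1 x) / (ε/2) with hw
    have hw0 : 0 ≤ w := div_nonneg hrm.1 hpos.le
    have hwlt : w < 2/ε := by
      rw [hw, div_lt_div_iff₀ hpos (by linarith : (0:ℝ) < ε)]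
      nlinarith [hrm.2]
    have hup : Φ x ξ ≤ m := Int.floor_le_floor hwlt.le
    rcases le_or_gt (Φ x ξ) 16 with h16 | h16
    · exact Finset.mem_union_left _ (Finset.mem_Icc.2 ⟨Int.floor_nonneg.2 hw0, h16⟩)
    · have h17 : (17:ℝ) ≤ w := by
        have := Int.lt_floor_add_one w
        have : (17:ℤ) ≤ ⌊w⌋ := h16
        calc (17:ℝ) = ((17:ℤ):ℝ) := by norm_num
        _ ≤ (⌊w⌋:ℝ) := by exact_mod_cast this
        _ ≤ w := Int.floor_le w
      have hrep : 17 * (ε/2) ≤ rep1 (ξ.1 x) := by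
        rw [hw, le_div_iff₀ hpos] at h17; linarith
      have hnorm : ‖ξ.1 x‖ < 4*ε := hx ξ.1 ξ.2
      have h1r : 1 - rep1 (ξ.1 x) < 4*ε := by
        have hmin := lt_of_le_of_lt (min_le_norm1 (ξ.1 x)) hnorm
        rcases min_lt_iff.1 hmin with h | h
        · linarith
        · exact h
      have hwgt : 2/ε - 8 < w := by
        rw [hw, lt_div_iff₀ hpos]
        have hee : (2/ε - 8) * (ε/2) = 1 - 4*ε := by field_simp; ring
        rw [hee]; linarith
      have : m - 8 ≤ Φ x ξ := by
        have : ⌊2/ε - (8:ℤ)⌋ ≤ ⌊w⌋ := Int.floor_le_floor (by push_cast; linarith)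
        rwa [Int.floor_sub_intCast] at this
      exact Finset.mem_union_right _ (Finset.mem_Icc.2 ⟨this, hup⟩)
  have hJcard : J.card ≤ 26 := by
    refine le_trans (Finset.card_union_le _ _) ?_
    have h1 : (Finset.Icc (0:ℤ) 16).card = 17 := by decide
    have h2 : (Finset.Icc (m-8) m).card = 9 := by
      rw [Int.card_Icc]; norm_num; rfl
    omega
  calc (T.image Φ).card ≤ (Fintype.piFinset (fun _ : ↥S => J)).card := Finset.card_le_card himg
    _ = J.card ^ S.card := by rw [Fintype.card_piFinset]; simp [Finset.prod_const, Fintype.card_coe]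
    _ ≤ 26 ^ S.card := Nat.pow_le_pow_left hJcard _


private def itv (p : ℝ × ℝ) : Set ℝ := Set.Ioo (p.1 - p.2) (p.1 + p.2)
private def itv3 (p : ℝ × ℝ) : Set ℝ := Set.Ioo (p.1 - 3*p.2) (p.1 + 3*p.2)

private lemma mem_itv_self {p : ℝ × ℝ} (hp : 0 < p.2) : p.1 ∈ itv p := by
  constructor <;> linarith

private lemma Ioo_disj_order {p q : ℝ × ℝ} (hp : 0 < p.2) (hq : 0 < q.2)
    (h : Disjoint (itv p) (itv q)) : p.1 + p.2 ≤ q.1 - q.2 ∨ q.1 + q.2 ≤ p.1 - p.2 := by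
  by_contra hc
  push_neg at hc
  obtain ⟨h1, h2⟩ := hc
  have hx : max (p.1 - p.2) (q.1 - q.2) < min (p.1 + p.2) (q.1 + q.2) := by
    simp only [max_lt_iff, lt_min_iff]
    exact ⟨⟨by linarith, h1⟩, ⟨h2, by linarith⟩⟩
  set z := (max (p.1 - p.2) (q.1 - q.2) + min (p.1 + p.2) (q.1 + q.2)) / 2 with hz
  have hzp : z ∈ itv p := by
    constructor
    · have := le_max_left (p.1 - p.2) (q.1 - q.2); simp only [hz]; linarith
    · have := min_le_left (p.1 + p.2) (q.1 + q.2); simp only [hz]; linarith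
  have hzq : z ∈ itv q := by
    constructor
    · have := le_max_right (p.1 - p.2) (q.1 - q.2); simp only [hz]; linarith
    · have := min_le_right (p.1 + p.2) (q.1 + q.2); simp only [hz]; linarith
  exact absurd rfl (h.ne_of_mem hzp hzq)

private lemma vitali_greedy : ∀ (n : ℕ) (P : Finset (ℝ × ℝ)), P.card ≤ n → (∀ p ∈ P, 0 < p.2) →
    ∃ Q ⊆ P, ((Q : Set (ℝ × ℝ)).Pairwise fun p q => Disjoint (itv p) (itv q)) ∧
      (⋃ p ∈ P, itv p) ⊆ ⋃ q ∈ Q, itv3 q := by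
  intro n
  induction n with
  | zero =>
    intro P hP _
    refine ⟨∅, Finset.empty_subset _, by simp, ?_⟩
    rw [Finset.card_eq_zero.1 (Nat.le_zero.1 hP)]
    simp
  | succ n ih =>
    intro P hP hpos
    rcases P.eq_empty_or_nonempty with rfl | hne
    · exact ⟨∅, Finset.empty_subset _, by simp, by simp⟩
    classical
    obtain ⟨p, hpP, hpmax⟩ := P.exists_max_image (fun q => q.2) hne
    set P' : Finset (ℝ × ℝ) := P.filter (fun q => Disjoint (itv q) (itv p)) with hP'
    have hpnot : p ∉ P' := by
      simp only [hP', Finset.mem_filter, not_and]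
      intro _ hd
      exact absurd rfl (hd.ne_of_mem (mem_itv_self (hpos p hpP)) (mem_itv_self (hpos p hpP)))
    have hcard : P'.card ≤ n := by
      have h1 : P' ⊆ P.erase p := fun q hq =>
        Finset.mem_erase.2 ⟨fun h => hpnot (h ▸ hq), (Finset.mem_filter.1 hq).1⟩
      have := Finset.card_le_card h1
      have := Finset.card_erase_of_mem hpP
      omega
    obtain ⟨Q', hQ'P', hQ'pair, hQ'cov⟩ := ih P' hcard
      (fun q hq => hpos q (Finset.mem_filter.1 hq).1)
    refine ⟨insert p Q', ?_, ?_, ?_⟩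
    · intro q hq
      rcases Finset.mem_insert.1 hq with rfl | hq
      · exact hpP
      · exact (Finset.mem_filter.1 (hQ'P' hq)).1
    · rw [Finset.coe_insert]
      apply Set.Pairwise.insert hQ'pair
      intro q hq _
      have hd : Disjoint (itv q) (itv p) := (Finset.mem_filter.1 (hQ'P' hq)).2
      exact ⟨hd.symm, hd⟩
    · intro x hx
      obtain ⟨q, hqP, hxq⟩ := Set.mem_iUnion₂.1 hx
      by_cases hq' : q ∈ P'
      · have : x ∈ ⋃ r ∈ Q', itv3 r := hQ'cov (Set.mem_biUnion hq' hxq)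
        obtain ⟨r, hr, hxr⟩ := Set.mem_iUnion₂.1 this
        exact Set.mem_biUnion (Finset.mem_insert_of_mem hr) hxr
      · have hnd : ¬ Disjoint (itv q) (itv p) := by
          intro hd
          exact hq' (Finset.mem_filter.2 ⟨hqP, hd⟩)
        obtain ⟨y, hyq, hyp⟩ := Set.not_disjoint_iff.1 hnd
        have hq2 : q.2 ≤ p.2 := hpmax q hqP
        refine Set.mem_biUnion (Finset.mem_insert_self p Q') ?_
        obtain ⟨hy1, hy2⟩ := hyq
        obtain ⟨hy3, hy4⟩ := hyp
        obtain ⟨hx1, hx2⟩ := hxq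
        simp only [itv3, Set.mem_Ioo]
        constructor <;> linarith

private lemma sum_incr_le (f : ℝ → ℝ) (hf : Monotone f) (A : ℝ) :
    ∀ (n : ℕ) (Q : Finset (ℝ × ℝ)) (B : ℝ), Q.card ≤ n → A ≤ B →
    (∀ q ∈ Q, 0 < q.2) → (∀ q ∈ Q, A ≤ q.1 - q.2 ∧ q.1 + q.2 ≤ B) →
    ((Q : Set (ℝ × ℝ)).Pairwise fun p q => Disjoint (itv p) (itv q)) →
    ∑ q ∈ Q, (f (q.1 + q.2) - f (q.1 - q.2)) ≤ f B - f A := by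
  intro n
  induction n with
  | zero =>
    intro Q B hQ hAB _ _ _
    rw [Finset.card_eq_zero.1 (Nat.le_zero.1 hQ)]
    simp [sub_nonneg.2 (hf hAB)]
  | succ n ih =>
    intro Q B hQ hAB hpos hbd hpair
    rcases Q.eq_empty_or_nonempty with rfl | hne
    · simp [sub_nonneg.2 (hf hAB)]
    classical
    obtain ⟨q, hqQ, hqmax⟩ := Q.exists_max_image (fun r => r.1 + r.2) hne
    have hord : ∀ r ∈ Q.erase q, r.1 + r.2 ≤ q.1 - q.2 := by
      intro r hr
      have hrQ : r ∈ Q := Finset.mem_erase.1 hr |>.2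
      have hrq : r ≠ q := Finset.mem_erase.1 hr |>.1
      have hd : Disjoint (itv r) (itv q) := hpair (Finset.mem_coe.2 hrQ) (Finset.mem_coe.2 hqQ) hrq
      rcases Ioo_disj_order (hpos r hrQ) (hpos q hqQ) hd with h | h
      · exact h
      · exfalso
        have := hqmax r hrQ
        have := hpos r hrQ
        linarith
    have hq1 : A ≤ q.1 - q.2 := (hbd q hqQ).1
    have hrec := ih (Q.erase q) (q.1 - q.2) (by
        have := Finset.card_erase_of_mem hqQ; omega)
      hq1
      (fun r hr => hpos r (Finset.mem_erase.1 hr).2)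
      (fun r hr => ⟨(hbd r (Finset.mem_erase.1 hr).2).1, hord r hr⟩)
      (hpair.mono (by simp only [Finset.coe_subset]; exact_mod_cast Finset.erase_subset q Q))
    rw [← Finset.sum_erase_add Q _ hqQ]
    have h1 : f (q.1 + q.2) ≤ f B := hf (hbd q hqQ).2
    linarith

private lemma length_le (a b : ℝ) (Q : Finset (ℝ × ℝ)) (hpos : ∀ q ∈ Q, 0 < q.2)
    (hcov : Set.Icc a b ⊆ ⋃ q ∈ Q, itv3 q) : b - a ≤ ∑ q ∈ Q, 6 * q.2 := by
  rcases le_or_gt b a with h | h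
  · exact le_trans (by linarith) (Finset.sum_nonneg fun q hq => by linarith [hpos q hq])
  have h1 : MeasureTheory.volume (Set.Icc a b) ≤ ∑ q ∈ Q, MeasureTheory.volume (itv3 q) :=
    le_trans (MeasureTheory.measure_mono hcov) (MeasureTheory.measure_biUnion_finset_le Q _)
  rw [Real.volume_Icc] at h1
  have h2 : ∀ q ∈ Q, MeasureTheory.volume (itv3 q) = ENNReal.ofReal (6 * q.2) := by
    intro q hq; rw [itv3, Real.volume_Ioo]; congr 1; ring
  rw [Finset.sum_congr rfl h2,
    ← ENNReal.ofReal_sum_of_nonneg (fun q hq => by linarith [hpos q hq])] at h1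
  exact (ENNReal.ofReal_le_ofReal_iff (Finset.sum_nonneg fun q hq => by linarith [hpos q hq])).1 h1

private lemma exists_lip (f : ℝ → ℝ) (hf : Monotone f) (a b U c M : ℝ)
    (hab : a < b) (hU : 0 < U) (hc : 0 < c) (hM : f (b + U) - f (a - U) ≤ M)
    (hlt : 6 * M < c * (b - a)) :
    ∃ t ∈ Set.Icc a b, ∀ u ∈ Set.Ioc (0:ℝ) U, f (t + u) - f (t - u) ≤ c * u := by
  classical
  by_contra hcon
  push_neg at hcon
  choose u hmem hslope using fun t : Set.Icc a b => hcon t t.2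
  have hcov : Set.Icc a b ⊆ ⋃ t : Set.Icc a b, Set.Ioo ((t:ℝ) - u t) ((t:ℝ) + u t) := by
    intro x hx
    refine Set.mem_iUnion.2 ⟨⟨x, hx⟩, ?_⟩
    have := (hmem ⟨x, hx⟩).1
    exact ⟨by simp; linarith, by simp; linarith⟩
  obtain ⟨s, hs⟩ := isCompact_Icc.elim_finite_subcover
    (fun t : Set.Icc a b => Set.Ioo ((t:ℝ) - u t) ((t:ℝ) + u t)) (fun t => isOpen_Ioo) hcov
  set P : Finset (ℝ × ℝ) := s.image (fun i => (i.1, u i)) with hPdef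
  have hP : ∀ p ∈ P, (a ≤ p.1 ∧ p.1 ≤ b) ∧ (0 < p.2 ∧ p.2 ≤ U) ∧
      c * p.2 < f (p.1 + p.2) - f (p.1 - p.2) := by
    intro p hp
    obtain ⟨i, _, rfl⟩ := Finset.mem_image.1 hp
    exact ⟨⟨i.2.1, i.2.2⟩, ⟨(hmem i).1, (hmem i).2⟩, hslope i⟩
  have hcovP : Set.Icc a b ⊆ ⋃ p ∈ P, itv p := by
    intro x hx
    obtain ⟨i, his, hxi⟩ := Set.mem_iUnion₂.1 (hs hx)
    exact Set.mem_biUnion (Finset.mem_image_of_mem _ his) hxi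
  obtain ⟨Q, hQP, hQpair, hQcov⟩ := vitali_greedy P.card P le_rfl (fun p hp => (hP p hp).2.1.1)
  have hQmem : ∀ q ∈ Q, (a ≤ q.1 ∧ q.1 ≤ b) ∧ (0 < q.2 ∧ q.2 ≤ U) ∧
      c * q.2 < f (q.1 + q.2) - f (q.1 - q.2) := fun q hq => hP q (hQP hq)
  have hlen : b - a ≤ ∑ q ∈ Q, 6 * q.2 :=
    length_le a b Q (fun q hq => (hQmem q hq).2.1.1) (hcovP.trans hQcov)
  have hsum : ∑ q ∈ Q, (f (q.1 + q.2) - f (q.1 - q.2)) ≤ f (b + U) - f (a - U) :=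
    sum_incr_le f hf (a - U) Q.card Q (b + U) le_rfl (by linarith)
      (fun q hq => (hQmem q hq).2.1.1)
      (fun q hq => ⟨by linarith [(hQmem q hq).1.1, (hQmem q hq).2.1.2],
        by linarith [(hQmem q hq).1.2, (hQmem q hq).2.1.2]⟩)
      hQpair
  have hslopes : ∑ q ∈ Q, c * q.2 ≤ ∑ q ∈ Q, (f (q.1 + q.2) - f (q.1 - q.2)) :=
    Finset.sum_le_sum fun q hq => ((hQmem q hq).2.2).le
  rw [← Finset.mul_sum] at hslopes
  have hcM : c * ∑ i ∈ Q, i.2 ≤ M := hslopes.trans (hsum.trans hM)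
  have hlen6 : b - a ≤ 6 * ∑ q ∈ Q, q.2 := by rwa [← Finset.mul_sum] at hlen
  have : c * (b - a) ≤ c * (6 * ∑ q ∈ Q, q.2) := mul_le_mul_of_nonneg_left hlen6 hc.le
  nlinarith


set_option maxHeartbeats 2000000 in
private lemma regular_from_estimates {D : ℝ} (hD1 : 1 ≤ D) (N : ℝ → ℝ)
    (hpos : ∀ r, 0 < r → 0 < N r) (hmono : ∀ r r', 0 < r → r ≤ r' → N r ≤ N r')
    (ρ : ℝ) (hρ : 0 < ρ)
    (hlip : ∀ u, 0 < u → u ≤ 1/(49*D) →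
      Real.log (N (ρ * Real.exp u)) - Real.log (N (ρ * Real.exp (-u))) ≤ 49*D*u)
    (κ : ℝ) (hκ : |κ| ≤ 1/(100*D)) :
    (1 - 100*D*|κ|) * N ρ ≤ N ((1+κ)*ρ) ∧ N ((1+κ)*ρ) ≤ (1 + 100*D*|κ|) * N ρ := by
  have hD0 : (0:ℝ) < D := by linarith
  have hNρ : 0 < N ρ := hpos ρ hρ
  have habs : 100*D*|κ| ≤ 1 := by
    have h := abs_nonneg κ
    calc 100*D*|κ| ≤ 100*D*(1/(100*D)) := by
          apply mul_le_mul_of_nonneg_left hκ (by positivity)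
      _ = 1 := by field_simp
  have hk2 : |κ| ≤ 1/2 := by nlinarith [abs_nonneg κ]
  have h1κpos : (0:ℝ) < 1 + κ := by
    have := neg_abs_le κ; linarith
  constructor
  · -- lower bound
    rcases le_or_gt 0 κ with hk | hk
    · have h1 : N ρ ≤ N ((1+κ)*ρ) := hmono ρ _ hρ (by nlinarith)
      nlinarith [mul_nonneg (mul_nonneg (by norm_num : (0:ℝ) ≤ 100) hD0.le) (abs_nonneg κ)]
    · set s : ℝ := -κ with hs
      have hs0 : 0 < s := by linarith
      have hsabs : |κ| = s := abs_of_neg hk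
      have hs1 : s ≤ 1/(100*D) := by rwa [hsabs] at hκ
      have h1s : (0:ℝ) < 1 - s := by
        have : s ≤ 1/2 := by rwa [hsabs] at hk2
        linarith
      have hs100 : 100*D*s ≤ 1 := by rwa [hsabs] at habs
      set u : ℝ := -Real.log (1-s) with hu
      have hu0 : 0 < u := by
        rw [hu, neg_pos]
        exact Real.log_neg h1s (by linarith)
      have hus : u ≤ s/(1-s) := by
        have h := Real.log_le_sub_one_of_pos (show (0:ℝ) < (1-s)⁻¹ by positivity)
        rw [Real.log_inv] at h
        have h2 : (1-s)⁻¹ - 1 = s/(1-s) := by field_simp; ring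
        rw [hu, ← h2]
        linarith
      have hsfrac : s/(1-s) ≤ (100/99)*s := by
        rw [div_le_iff₀ h1s]
        have h99 : (99:ℝ)/100 ≤ 1 - s := by
          have : s ≤ 1/100 := by
            calc s ≤ 1/(100*D) := hs1
              _ ≤ 1/100 := by
                apply one_div_le_one_div_of_le (by norm_num)
                nlinarith
          linarith
        nlinarith
      have huU : u ≤ 1/(49*D) := by
        have h1 : u ≤ (100/99)*s := le_trans hus hsfrac
        have h2 : (100/99)*s ≤ 1/(99*D) := by
          have he : (100/99 : ℝ)*(1/(100*D)) = 1/(99*D) := by field_simp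
          calc (100/99 : ℝ)*s ≤ (100/99)*(1/(100*D)) := by nlinarith
            _ = 1/(99*D) := he
        have h3 : (1:ℝ)/(99*D) ≤ 1/(49*D) :=
          one_div_le_one_div_of_le (by positivity) (by linarith)
        linarith
      have hlip' := hlip u hu0 huU
      have hident : ρ * Real.exp (-u) = (1-s)*ρ := by
        rw [hu, neg_neg, Real.exp_log h1s]; ring
      have hident2 : (1+κ)*ρ = (1-s)*ρ := by rw [hs]; ring
      have hρu : ρ ≤ ρ * Real.exp u := by
        nlinarith [Real.one_le_exp hu0.le]
      have hmono2 : Real.log (N ρ) ≤ Real.log (N (ρ * Real.exp u)) :=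
        Real.log_le_log hNρ (hmono ρ _ hρ hρu)
      rw [hident] at hlip'
      have hN1s : 0 < N ((1-s)*ρ) := hpos _ (by positivity)
      have hlogs : Real.log (N ρ) - Real.log (N ((1-s)*ρ)) ≤ 49*D*u := by linarith
      have hexp : N ρ ≤ N ((1-s)*ρ) * Real.exp (49*D*u) := by
        calc N ρ = Real.exp (Real.log (N ρ)) := (Real.exp_log hNρ).symm
          _ ≤ Real.exp (Real.log (N ((1-s)*ρ)) + 49*D*u) := Real.exp_le_exp.2 (by linarith)
          _ = N ((1-s)*ρ) * Real.exp (49*D*u) := by rw [Real.exp_add, Real.exp_log hN1s]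
      have hcu : 49*D*u ≤ 100*D*s := by
        have h1 : u ≤ (100/99)*s := le_trans hus hsfrac
        nlinarith
      have hexpneg : 1 - 100*D*s ≤ Real.exp (-(49*D*u)) := by
        have h1 := Real.add_one_le_exp (-(49*D*u))
        linarith
      have hE : (0:ℝ) < Real.exp (49*D*u) := Real.exp_pos _
      have hstep : N ρ * Real.exp (-(49*D*u)) ≤ N ((1-s)*ρ) := by
        rw [Real.exp_neg, ← div_eq_mul_inv, div_le_iff₀ hE]
        exact hexp
      rw [hident2, hsabs]  -- goal now in terms of s
      calc (1 - 100*D*s) * N ρ ≤ Real.exp (-(49*D*u)) * N ρ :=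
            mul_le_mul_of_nonneg_right hexpneg hNρ.le
        _ = N ρ * Real.exp (-(49*D*u)) := mul_comm _ _
        _ ≤ N ((1-s)*ρ) := hstep
  · -- upper bound
    rcases le_or_gt κ 0 with hk | hk
    · have h1 : N ((1+κ)*ρ) ≤ N ρ := hmono _ ρ (by positivity) (by nlinarith)
      nlinarith [mul_nonneg (mul_nonneg (by norm_num : (0:ℝ) ≤ 100) hD0.le) (abs_nonneg κ)]
    · have hkabs : |κ| = κ := abs_of_pos hk
      have hk1 : κ ≤ 1/(100*D) := by rwa [hkabs] at hκ
      have hk100 : 100*D*κ ≤ 1 := by rwa [hkabs] at habs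
      set u : ℝ := Real.log (1+κ) with hu
      have hu0 : 0 < u := Real.log_pos (by linarith)
      have huk : u ≤ κ := by
        have := Real.log_le_sub_one_of_pos h1κpos
        rw [hu]; linarith
      have huU : u ≤ 1/(49*D) := by
        have h3 : (1:ℝ)/(100*D) ≤ 1/(49*D) :=
          one_div_le_one_div_of_le (by positivity) (by linarith)
        linarith
      have hlip' := hlip u hu0 huU
      have hident : ρ * Real.exp u = (1+κ)*ρ := by
        rw [hu, Real.exp_log h1κpos]; ring
      have hρu : ρ * Real.exp (-u) ≤ ρ := by
        have h1 : Real.exp (-u) ≤ 1 := by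
          rw [Real.exp_neg]
          have h2 := Real.one_le_exp hu0.le
          have h3 := Real.exp_pos u
          rw [inv_le_one_iff₀]
          right; exact h2
        nlinarith
      have hNρκ : 0 < N ((1+κ)*ρ) := hpos _ (by positivity)
      have hmono2 : Real.log (N (ρ * Real.exp (-u))) ≤ Real.log (N ρ) :=
        Real.log_le_log (hpos _ (by positivity)) (hmono _ _ (by positivity) hρu)
      rw [hident] at hlip'
      have hlogs : Real.log (N ((1+κ)*ρ)) - Real.log (N ρ) ≤ 49*D*u := by linarith
      have hexp : N ((1+κ)*ρ) ≤ N ρ * Real.exp (49*D*u) := by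
        calc N ((1+κ)*ρ) = Real.exp (Real.log (N ((1+κ)*ρ))) := (Real.exp_log hNρκ).symm
          _ ≤ Real.exp (Real.log (N ρ) + 49*D*u) := Real.exp_le_exp.2 (by linarith)
          _ = N ρ * Real.exp (49*D*u) := by rw [Real.exp_add, Real.exp_log hNρ]
      set y : ℝ := 100*D*κ with hy
      have hy0 : 0 < y := by positivity
      have hy1 : y ≤ 1 := hk100
      have hcuy : 49*D*u ≤ (49/100 : ℝ)*y := by
        rw [hy]
        have h49 := mul_le_mul_of_nonneg_left huk (by positivity : (0:ℝ) ≤ 49*D)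
        linarith
      have hexpy : Real.exp ((49/100 : ℝ)*y) ≤ 1 + y := by
        have hpos49 : (0:ℝ) < 1 - (49/100 : ℝ)*y := by linarith
        have e1 : 1 - (49/100 : ℝ)*y ≤ Real.exp (-((49/100 : ℝ)*y)) := by
          have := Real.add_one_le_exp (-((49/100 : ℝ)*y)); linarith
        have key : (1 - (49/100 : ℝ)*y) * Real.exp ((49/100 : ℝ)*y) ≤ 1 := by
          calc (1 - (49/100 : ℝ)*y) * Real.exp ((49/100 : ℝ)*y)
              ≤ Real.exp (-((49/100 : ℝ)*y)) * Real.exp ((49/100 : ℝ)*y) :=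
                mul_le_mul_of_nonneg_right e1 (Real.exp_pos _).le
            _ = 1 := by rw [← Real.exp_add]; simp
        nlinarith [Real.exp_pos ((49/100 : ℝ)*y)]
      have hcu' : Real.exp (49*D*u) ≤ 1 + y :=
        le_trans (Real.exp_le_exp.2 hcuy) hexpy
      rw [hkabs]
      calc N ((1+κ)*ρ) ≤ N ρ * Real.exp (49*D*u) := hexp
        _ ≤ N ρ * (1 + y) := mul_le_mul_of_nonneg_left hcu' hNρ.le
        _ = (1 + 100*D*κ) * N ρ := by rw [hy]; ring

end helpers

set_option maxHeartbeats 2000000 in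
/-- **Regular Bohr sets are ubiquitous**: for any nonempty finite set `S` of characters and
any `0 < ε < 1` there is `ρ ∈ [ε, 2ε]` such that `B(S,ρ)` is regular. -/
theorem regular_bohr_sets_ubiquitous {G : Type*} [AddCommGroup G] [Fintype G]
    (S : Finset (G →+ AddCircle (1 : ℝ))) (hS : S.Nonempty)
    (ε : ℝ) (hε0 : 0 < ε) (hε1 : ε < 1) :
    ∃ ρ : ℝ, ρ ∈ Set.Icc ε (2 * ε) ∧ IsRegularBohr S ρ := by
  have hd1 : 1 ≤ S.card := hS.card_pos
  set D : ℝ := (S.card : ℝ) with hD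
  have hD1 : (1:ℝ) ≤ D := by rw [hD]; exact_mod_cast hd1
  have hD0 : (0:ℝ) < D := by linarith
  set N : ℝ → ℝ := fun r => ((bohr S r).ncard : ℝ) with hN
  have hNpos : ∀ r, 0 < r → 0 < N r := by
    intro r hr
    have := one_le_ncard_bohr S hr
    show (0:ℝ) < ((bohr S r).ncard : ℝ)
    exact_mod_cast this
  have hNmono : ∀ r r', 0 < r → r ≤ r' → N r ≤ N r' := by
    intro r r' _ h
    show ((bohr S r).ncard : ℝ) ≤ ((bohr S r').ncard : ℝ)
    exact_mod_cast ncard_bohr_mono S h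
  set f : ℝ → ℝ := fun t => Real.log (N (ε * Real.exp t)) with hf
  have hfmono : Monotone f := by
    intro t t' h
    have h1 : (0:ℝ) < ε * Real.exp t := by positivity
    have h2 : ε * Real.exp t ≤ ε * Real.exp t' := by
      have := Real.exp_le_exp.2 h
      nlinarith [Real.exp_pos t]
    exact Real.log_le_log (hNpos _ h1) (hNmono _ _ h1 h2)
  set U : ℝ := 1 / (49 * D) with hU
  set c : ℝ := 49 * D with hc
  set M : ℝ := D * Real.log 26 with hM
  have hU0 : 0 < U := by rw [hU]; positivity
  have hc0 : 0 < c := by rw [hc]; positivity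
  have hlog2 : (0.6931471803 : ℝ) < Real.log 2 := Real.log_two_gt_d9
  have hab : (0:ℝ) < Real.log 2 := by linarith
  have hU49 : U ≤ 1/49 := by
    rw [hU]
    apply one_div_le_one_div_of_le (by norm_num) (by linarith)
  have hMbound : f (Real.log 2 + U) - f (0 - U) ≤ M := by
    have hup : ε * Real.exp (Real.log 2 + U) ≤ 4 * ε := by
      rw [Real.exp_add, Real.exp_log (by norm_num : (0:ℝ) < 2)]
      have : Real.exp U ≤ 2 := by
        rw [show (2:ℝ) = Real.exp (Real.log 2) from (Real.exp_log (by norm_num)).symm]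
        exact Real.exp_le_exp.2 (by linarith)
      nlinarith
    have hdn : ε / 2 ≤ ε * Real.exp (0 - U) := by
      rw [zero_sub]
      have h2 : (1:ℝ)/2 ≤ Real.exp (-U) := by
        rw [show (1:ℝ)/2 = Real.exp (-Real.log 2) by
          rw [Real.exp_neg, Real.exp_log] <;> norm_num]
        exact Real.exp_le_exp.2 (by linarith)
      nlinarith
    have h1 : f (Real.log 2 + U) ≤ Real.log (N (4*ε)) :=
      Real.log_le_log (hNpos _ (by positivity)) (hNmono _ _ (by positivity) hup)
    have h2 : Real.log (N (ε/2)) ≤ f (0 - U) :=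
      Real.log_le_log (hNpos _ (by linarith)) (hNmono _ _ (by linarith) hdn)
    have h3 : Real.log (N (4*ε)) ≤ D * Real.log 26 + Real.log (N (ε/2)) := by
      have hg := bohr_growth S hε0 hε1
      have hgR : N (4*ε) ≤ (26:ℝ) ^ S.card * N (ε/2) := by
        show ((bohr S (4*ε)).ncard : ℝ) ≤ (26:ℝ) ^ S.card * ((bohr S (ε/2)).ncard : ℝ)
        exact_mod_cast hg
      have h4 := Real.log_le_log (hNpos _ (by positivity)) hgR
      rwa [Real.log_mul (by positivity) (ne_of_gt (hNpos _ (by linarith))),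
        Real.log_pow, ← hD] at h4
    rw [hM]
    linarith
  have hlt : 6 * M < c * (Real.log 2 - 0) := by
    rw [hM, hc]
    have h26 : Real.log 26 < 49/6 * Real.log 2 := by
      have h1 : ((26:ℝ))^6 < 2^49 := by norm_num
      have h2 : Real.log ((26:ℝ)^6) < Real.log ((2:ℝ)^49) :=
        Real.log_lt_log (by positivity) h1
      rw [Real.log_pow, Real.log_pow] at h2
      push_cast at h2
      linarith
    nlinarith
  obtain ⟨t₀, ht₀, hgood⟩ := exists_lip f hfmono 0 (Real.log 2) U c M hab hU0 hc0 hMbound hlt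
  set ρ : ℝ := ε * Real.exp t₀ with hρ
  have hρpos : 0 < ρ := by rw [hρ]; positivity
  have hρmem : ρ ∈ Set.Icc ε (2*ε) := by
    rw [hρ]
    constructor
    · have h1 : (1:ℝ) ≤ Real.exp t₀ := by
        rw [show (1:ℝ) = Real.exp 0 from (Real.exp_zero).symm]
        exact Real.exp_le_exp.2 ht₀.1
      nlinarith
    · have h1 : Real.exp t₀ ≤ 2 := by
        rw [show (2:ℝ) = Real.exp (Real.log 2) from (Real.exp_log (by norm_num)).symm]
        exact Real.exp_le_exp.2 ht₀.2
      nlinarith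
  have hlip : ∀ u, 0 < u → u ≤ 1/(49*D) →
      Real.log (N (ρ * Real.exp u)) - Real.log (N (ρ * Real.exp (-u))) ≤ 49*D*u := by
    intro u h1 h2
    have hg := hgood u ⟨h1, by rw [hU]; exact h2⟩
    have e1 : ρ * Real.exp u = ε * Real.exp (t₀ + u) := by
      rw [hρ, Real.exp_add]; ring
    have e2 : ρ * Real.exp (-u) = ε * Real.exp (t₀ - u) := by
      rw [hρ, Real.exp_sub, Real.exp_neg]
      field_simp
    rw [e1, e2]
    calc Real.log (N (ε * Real.exp (t₀ + u))) - Real.log (N (ε * Real.exp (t₀ - u)))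
        = f (t₀ + u) - f (t₀ - u) := by rw [hf]
      _ ≤ c * u := hg
      _ = 49*D*u := by rw [hc]
  refine ⟨ρ, hρmem, ?_⟩
  intro κ hκ
  rw [← hD] at hκ ⊢
  have := regular_from_estimates hD1 N hNpos hNmono ρ hρpos hlip κ (by
    rw [show (1:ℝ)/(100*D) = 1/(100*D) from rfl]; exact_mod_cast hκ)
  rw [hN] at this
  constructor
  · exact this.1
  · exact this.2
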